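/- Let λ₁, λ₂, λ₃, λ₄ > 0 and Λ = diag(λ₁, λ₂, λ₃, λ₄), and let G be the dimension-4 perfect code generation matrix. Then there exist a unitary 4×4 complex matrix Q and an upper triangular 4×4 matrix R all of whose entries are real, with positive diagonal entries, such that ΛG = Q·R. -/

import Mathlib

open Matrix Complex Real

/-- `θ₁ = 2cos(4π/15)`, `θ₂ = 2cos(2π/15)`, `θ₃ = 2cos(16π/15)`, `θ₄ = 2cos(8π/15)`. -/
noncomputable def theta4 : Fin 4 → ℝ :=
  ![2 * Real.cos (4 * Real.pi / 15), 2 * Real.cos (2 * Real.pi / 15),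
    2 * Real.cos (16 * Real.pi / 15), 2 * Real.cos (8 * Real.pi / 15)]

/-- The dimension-4 perfect code generation matrix. -/
noncomputable def perfectG4 : Matrix (Fin 4) (Fin 4) ℂ :=
  Matrix.of fun u v =>
    (1 / (Real.sqrt 15 : ℂ)) *
      (![1 + Complex.I * ((theta4 u : ℂ) ^ 2 - 3),
         (theta4 u : ℂ) + Complex.I * ((theta4 u : ℂ) ^ 3 - 3 * (theta4 u : ℂ)),
         ((theta4 u : ℂ) ^ 3 - 3 * (theta4 u : ℂ)) +
           Complex.I * (-1 + 4 * (theta4 u : ℂ) - (theta4 u : ℂ) ^ 3),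
         (-1 - 3 * (theta4 u : ℂ) + (theta4 u : ℂ) ^ 2 + (theta4 u : ℂ) ^ 3) + Complex.I] v)



open scoped RealInnerProductSpace

instance (priority := 10000) : WellFoundedLT (Fin 4) := inferInstanceAs (WellFoundedLT (Fin 4))

lemma real_qr (A : Matrix (Fin 4) (Fin 4) ℝ) (hA : IsUnit A) :
    ∃ Q R : Matrix (Fin 4) (Fin 4) ℝ,
      Qᵀ * Q = 1 ∧ (∀ u w : Fin 4, w < u → R u w = 0) ∧ (∀ u : Fin 4, 0 < R u u) ∧ A = Q * R := by
  classical
  have hcols : LinearIndependent ℝ (fun i ↦ Aᵀ i) :=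
    Matrix.linearIndependent_cols_iff_isUnit.2 hA
  set f : Fin 4 → EuclideanSpace ℝ (Fin 4) :=
    fun j => (WithLp.equiv 2 (Fin 4 → ℝ)).symm (Aᵀ j) with hf
  have hfli : LinearIndependent ℝ f := by
    have := hcols.map' (WithLp.linearEquiv 2 ℝ (Fin 4 → ℝ)).symm.toLinearMap
      (WithLp.linearEquiv 2 ℝ (Fin 4 → ℝ)).symm.ker
    exact this
  have hd : Module.finrank ℝ (EuclideanSpace ℝ (Fin 4)) = Fintype.card (Fin 4) := by
    simp [finrank_euclideanSpace]
  set onb : OrthonormalBasis (Fin 4) ℝ (EuclideanSpace ℝ (Fin 4)) := InnerProductSpace.gramSchmidtOrthonormalBasis hd f with honb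
  have honb_eq : ∀ u, onb u = InnerProductSpace.gramSchmidtNormed ℝ f u := by
    intro u
    refine InnerProductSpace.gramSchmidtOrthonormalBasis_apply hd ?_
    simp only [InnerProductSpace.gramSchmidtNormed, ne_eq, smul_eq_zero, not_or]
    have h0 := InnerProductSpace.gramSchmidt_ne_zero u hfli
    exact ⟨by simpa using h0, h0⟩
  refine ⟨Matrix.of (fun x u => onb u x), Matrix.of (fun u w => ⟪onb u, f w⟫), ?_, ?_, ?_, ?_⟩
  · ext u w
    have := onb.orthonormal
    rw [orthonormal_iff_ite] at this
    have hiw := this u w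
    rw [PiLp.inner_apply] at hiw
    simp only [Matrix.mul_apply, Matrix.transpose_apply, Matrix.of_apply, Matrix.one_apply]
    simpa [RCLike.inner_apply, mul_comm] using hiw
  · intro u w hwu
    exact InnerProductSpace.gramSchmidtOrthonormalBasis_inv_triangular hd f hwu
  · intro u
    have hne : InnerProductSpace.gramSchmidt ℝ f u ≠ 0 := InnerProductSpace.gramSchmidt_ne_zero u hfli
    have hpos : 0 < ‖InnerProductSpace.gramSchmidt ℝ f u‖ := norm_pos_iff.2 hne
    have : ⟪onb u, f u⟫ = ‖InnerProductSpace.gramSchmidt ℝ f u‖ := by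
      rw [honb_eq u, InnerProductSpace.gramSchmidtNormed]
      nth_rewrite 1 [InnerProductSpace.gramSchmidt_def' ℝ f u]
      rw [inner_add_right, inner_sum, inner_smul_left, real_inner_self_eq_norm_sq]
      rw [Finset.sum_eq_zero, add_zero]
      · simp only [conj_trivial]
        field_simp
        rfl
      · intro i hi
        rw [Finset.mem_Iio] at hi
        rw [Submodule.starProjection_singleton, inner_smul_left, inner_smul_right,
          InnerProductSpace.gramSchmidt_orthogonal ℝ f hi.ne', mul_zero, mul_zero]
    rw [Matrix.of_apply, this]
    exact hpos
  · ext x w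
    have hrep := onb.sum_repr' (f w)
    have := congrFun (congrArg (WithLp.linearEquiv 2 ℝ (Fin 4 → ℝ)) hrep) x
    rw [map_sum] at this
    simp only [_root_.map_smul] at this
    rw [Finset.sum_apply] at this
    simp only [Pi.smul_apply, smul_eq_mul] at this
    have hfx : (WithLp.linearEquiv 2 ℝ (Fin 4 → ℝ)) (f w) x = A x w := rfl
    have honbx : ∀ u, (WithLp.linearEquiv 2 ℝ (Fin 4 → ℝ)) (onb u) x = onb u x := fun u => rfl
    rw [hfx] at this
    simp only [honbx] at this
    rw [Matrix.mul_apply]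
    rw [← this]
    simp [mul_comm]

lemma cos_five_mul' (x : ℝ) :
    Real.cos (5 * x) = 16 * Real.cos x ^ 5 - 20 * Real.cos x ^ 3 + 5 * Real.cos x := by
  have h5 : 5 * x = 2 * x + 3 * x := by ring
  rw [h5, Real.cos_add, Real.cos_two_mul, Real.cos_three_mul, Real.sin_two_mul,
    Real.sin_three_mul]
  have hs := Real.sin_sq_add_cos_sq x
  linear_combination (8 * Real.cos x * Real.sin x ^ 2 + 2 * Real.cos x - 8 * Real.cos x ^ 3) * hs

lemma cos_two_pi_div_three : Real.cos (2 * Real.pi / 3) = -(1/2) := by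
  rw [show (2:ℝ) * Real.pi / 3 = Real.pi - Real.pi / 3 by ring, Real.cos_pi_sub,
    Real.cos_pi_div_three]

lemma cos_four_pi_div_three : Real.cos (4 * Real.pi / 3) = -(1/2) := by
  rw [show (4:ℝ) * Real.pi / 3 = 2 * Real.pi - 2 * Real.pi / 3 by ring, Real.cos_two_pi_sub,
    cos_two_pi_div_three]

lemma theta4_quintic (u : Fin 4) :
    theta4 u ^ 5 - 5 * theta4 u ^ 3 + 5 * theta4 u + 1 = 0 := by
  have key : ∀ x : ℝ, Real.cos (5 * x) = -(1/2) →
      (2 * Real.cos x) ^ 5 - 5 * (2 * Real.cos x) ^ 3 + 5 * (2 * Real.cos x) + 1 = 0 := by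
    intro x hx
    have h := cos_five_mul' x
    rw [hx] at h
    linear_combination -2 * h
  fin_cases u
  · exact key _ (by rw [show (5:ℝ) * (4 * Real.pi / 15) = 4 * Real.pi / 3 by ring,
      cos_four_pi_div_three])
  · exact key _ (by rw [show (5:ℝ) * (2 * Real.pi / 15) = 2 * Real.pi / 3 by ring,
      cos_two_pi_div_three])
  · exact key _ (by rw [show (5:ℝ) * (16 * Real.pi / 15) = 4 * Real.pi / 3 + 2*Real.pi + 2*Real.pi by ring,
      Real.cos_add_two_pi, Real.cos_add_two_pi, cos_four_pi_div_three])
  · exact key _ (by rw [show (5:ℝ) * (8 * Real.pi / 15) = 2 * Real.pi / 3 + 2*Real.pi by ring,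
      Real.cos_add_two_pi, cos_two_pi_div_three])

lemma two_cos_ne_two_cos {a b : ℝ} (ha0 : 0 ≤ a) (ha1 : a ≤ Real.pi)
    (hb0 : 0 ≤ b) (hb1 : b ≤ Real.pi) (hab : a ≠ b) :
    2 * Real.cos a ≠ 2 * Real.cos b := by
  intro h
  exact hab (Real.injOn_cos ⟨ha0, ha1⟩ ⟨hb0, hb1⟩ (by linarith))

lemma cos_sixteen : Real.cos (16 * Real.pi / 15) = Real.cos (14 * Real.pi / 15) := by
  rw [show (16:ℝ) * Real.pi / 15 = 2 * Real.pi - 14 * Real.pi / 15 by ring, Real.cos_two_pi_sub]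

lemma theta4_pairwise : ∀ i j : Fin 4, i ≠ j → theta4 i ≠ theta4 j := by
  have pp := Real.pi_pos
  intro i j hij
  fin_cases i <;> fin_cases j <;>
    simp only [theta4, Matrix.cons_val_zero, Matrix.cons_val_one, Matrix.head_cons,
      Matrix.cons_val', Matrix.cons_val_fin_one, Matrix.empty_val', Fin.isValue] <;>
    first
      | exact absurd rfl hij
      | (try rw [cos_sixteen]
         exact two_cos_ne_two_cos (by positivity) (by nlinarith) (by positivity) (by nlinarith)
           (by intro hE; nlinarith))

lemma theta4_ne_neg_one (u : Fin 4) : theta4 u ≠ -1 := by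
  have pp := Real.pi_pos
  have key : ∀ a : ℝ, 0 ≤ a → a ≤ Real.pi → a ≠ 2 * Real.pi / 3 → 2 * Real.cos a ≠ -1 := by
    intro a h0 h1 hne h
    have : 2 * Real.cos a = 2 * Real.cos (2 * Real.pi / 3) := by
      rw [cos_two_pi_div_three]; linarith
    exact two_cos_ne_two_cos h0 h1 (by positivity) (by nlinarith) hne this
  fin_cases u <;>
    simp only [theta4, Matrix.cons_val_zero, Matrix.cons_val_one, Matrix.head_cons,
      Matrix.cons_val', Matrix.cons_val_fin_one, Matrix.empty_val', Fin.isValue] <;>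
    (try rw [cos_sixteen]) <;>
    exact key _ (by positivity) (by nlinarith) (by intro hE; nlinarith)

lemma theta4_quartic (u : Fin 4) :
    theta4 u ^ 4 - theta4 u ^ 3 - 4 * theta4 u ^ 2 + 4 * theta4 u + 1 = 0 := by
  have h5 := theta4_quintic u
  have h1 := theta4_ne_neg_one u
  have hfac : (theta4 u + 1) *
      (theta4 u ^ 4 - theta4 u ^ 3 - 4 * theta4 u ^ 2 + 4 * theta4 u + 1) = 0 := by
    linear_combination h5
  rcases mul_eq_zero.1 hfac with h | h
  · exact absurd (by linarith) h1
  · exact h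

noncomputable def M4 : Matrix (Fin 4) (Fin 4) ℝ :=
  Matrix.of fun u v => ![1, theta4 u, theta4 u ^ 3 - 3 * theta4 u,
    -1 - 3 * theta4 u + theta4 u ^ 2 + theta4 u ^ 3] v

lemma M4_eq : M4 = Matrix.vandermonde theta4 *
    !![1,0,0,-1; 0,1,-3,-3; 0,0,0,1; 0,0,1,1] := by
  ext u v
  rw [Matrix.mul_apply, Fin.sum_univ_four]
  fin_cases v <;>
    (simp [M4, Matrix.vandermonde, Matrix.vecHead, Matrix.vecTail,
       show ((3:Fin 4):ℕ) = 3 from rfl, show ((2:Fin 4):ℕ) = 2 from rfl]; try ring)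

lemma M4_isUnit : IsUnit M4 := by
  rw [Matrix.isUnit_iff_isUnit_det, M4_eq, Matrix.det_mul, Matrix.det_vandermonde]
  apply IsUnit.mul
  · rw [isUnit_iff_ne_zero]
    rw [Finset.prod_ne_zero_iff]
    intro i _
    rw [Finset.prod_ne_zero_iff]
    intro j hj
    rw [Finset.mem_Ioi] at hj
    exact sub_ne_zero.2 (theta4_pairwise j i hj.ne')
  · rw [isUnit_iff_ne_zero]
    simp [Matrix.det_succ_row_zero, Fin.sum_univ_succ]

noncomputable def z4 : Fin 4 → ℂ :=
  fun u => (1 / (Real.sqrt 15 : ℂ)) * (1 + Complex.I * ((theta4 u : ℂ) ^ 2 - 3))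


lemma map_mul_ofReal (M N : Matrix (Fin 4) (Fin 4) ℝ) :
    (M * N).map Complex.ofReal = M.map Complex.ofReal * N.map Complex.ofReal := by
  ext u w
  simp [Matrix.map_apply, Matrix.mul_apply]

lemma z4_ne_zero (u : Fin 4) : z4 u ≠ 0 := by
  have h15 : (0:ℝ) < Real.sqrt 15 := Real.sqrt_pos.2 (by norm_num)
  apply mul_ne_zero
  · simp only [ne_eq, div_eq_zero_iff, one_ne_zero, false_or]
    exact_mod_cast h15.ne'
  · intro h
    have := congrArg Complex.re h
    simp [← Complex.ofReal_pow] at this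

lemma perfectG4_fac (u v : Fin 4) : perfectG4 u v = z4 u * (M4 u v : ℂ) := by
  have hq : (theta4 u : ℂ) ^ 5 - 5 * (theta4 u : ℂ) ^ 3 + 5 * (theta4 u : ℂ) + 1 = 0 := by
    have := theta4_quintic u
    have := congrArg (Complex.ofReal) this
    push_cast at this
    convert this using 1 <;> push_cast <;> ring
  have hp : (theta4 u : ℂ) ^ 4 - (theta4 u : ℂ) ^ 3 - 4 * (theta4 u : ℂ) ^ 2
      + 4 * (theta4 u : ℂ) + 1 = 0 := by
    have := congrArg (Complex.ofReal) (theta4_quartic u)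
    push_cast at this
    convert this using 1 <;> push_cast <;> ring
  have e0 : perfectG4 u 0 = z4 u * ((M4 u 0 : ℝ) : ℂ) := by
    show (1 / (Real.sqrt 15 : ℂ)) * (1 + Complex.I * ((theta4 u : ℂ) ^ 2 - 3))
      = z4 u * (((1:ℝ) : ℝ) : ℂ)
    rw [z4]; push_cast; ring
  have e1 : perfectG4 u 1 = z4 u * ((M4 u 1 : ℝ) : ℂ) := by
    show (1 / (Real.sqrt 15 : ℂ)) *
        ((theta4 u : ℂ) + Complex.I * ((theta4 u : ℂ) ^ 3 - 3 * (theta4 u : ℂ)))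
      = z4 u * ((theta4 u : ℝ) : ℂ)
    rw [z4]; push_cast; ring
  have e2 : perfectG4 u 2 = z4 u * ((M4 u 2 : ℝ) : ℂ) := by
    show (1 / (Real.sqrt 15 : ℂ)) *
        (((theta4 u : ℂ) ^ 3 - 3 * (theta4 u : ℂ)) +
          Complex.I * (-1 + 4 * (theta4 u : ℂ) - (theta4 u : ℂ) ^ 3))
      = z4 u * ((theta4 u ^ 3 - 3 * theta4 u : ℝ) : ℂ)
    rw [z4]; push_cast
    linear_combination (-(1 / (Real.sqrt 15 : ℂ)) * Complex.I) * hq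
  have e3 : perfectG4 u 3 = z4 u * ((M4 u 3 : ℝ) : ℂ) := by
    show (1 / (Real.sqrt 15 : ℂ)) *
        ((-1 - 3 * (theta4 u : ℂ) + (theta4 u : ℂ) ^ 2 + (theta4 u : ℂ) ^ 3) + Complex.I)
      = z4 u * ((-1 - 3 * theta4 u + theta4 u ^ 2 + theta4 u ^ 3 : ℝ) : ℂ)
    rw [z4]; push_cast
    linear_combination (-(1 / (Real.sqrt 15 : ℂ)) * Complex.I) * hq +
      (-(1 / (Real.sqrt 15 : ℂ)) * Complex.I) * hp
  fin_cases v
  · exact e0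
  · exact e1
  · exact e2
  · exact e3


/-- For `λ₁,…,λ₄ > 0` and `Λ = diag(λ₁,…,λ₄)`, there is a QR decomposition `ΛG = QR`
with `Q` unitary and `R` upper triangular with real entries and positive diagonal. -/
theorem stmt15 (lam : Fin 4 → ℝ) (hlam : ∀ u, 0 < lam u) :
    ∃ Q R : Matrix (Fin 4) (Fin 4) ℂ,
      Qᴴ * Q = 1 ∧
      (∀ u w : Fin 4, w < u → R u w = 0) ∧
      (∀ u w : Fin 4, (R u w).im = 0) ∧
      (∀ u : Fin 4, 0 < (R u u).re) ∧
      Matrix.diagonal (fun u => (lam u : ℂ)) * perfectG4 = Q * R := by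

  classical
  set d : Fin 4 → ℝ := fun u => lam u * ‖z4 u‖ with hd
  have hdpos : ∀ u, 0 < d u := fun u => mul_pos (hlam u) (norm_pos_iff.mpr (z4_ne_zero u))
  set B : Matrix (Fin 4) (Fin 4) ℝ := Matrix.diagonal d * M4 with hB
  have hBunit : IsUnit B := by
    rw [Matrix.isUnit_iff_isUnit_det, Matrix.det_mul, Matrix.det_diagonal]
    exact ((isUnit_iff_ne_zero.2 (Finset.prod_ne_zero_iff.2 fun u _ => (hdpos u).ne')).mul
      ((Matrix.isUnit_iff_isUnit_det M4).1 M4_isUnit))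
  obtain ⟨Q₀, R₀, hQ₀, hR₀tri, hR₀pos, hBQR⟩ := real_qr B hBunit
  set p : Fin 4 → ℂ := fun u => (lam u : ℂ) * z4 u / (d u : ℂ) with hp
  have hpd : ∀ u, p u * (d u : ℂ) = (lam u : ℂ) * z4 u := by
    intro u
    rw [hp]
    exact div_mul_cancel₀ _ (by exact_mod_cast (hdpos u).ne')
  have hpabs : ∀ u, star (p u) * p u = 1 := by
    intro u
    have habs : ‖p u‖ = 1 := by
      rw [hp]
      simp only [norm_div, norm_mul, Complex.norm_real, Real.norm_eq_abs]
      rw [abs_of_pos (hlam u), abs_of_pos (hdpos u)]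
      show d u / d u = 1
      exact div_self (hdpos u).ne'
    have := Complex.normSq_eq_norm_sq (p u)
    rw [habs] at this
    rw [Complex.star_def, ← Complex.normSq_eq_conj_mul_self, this]
    norm_num
  refine ⟨Matrix.diagonal p * Q₀.map Complex.ofReal, R₀.map Complex.ofReal, ?_, ?_, ?_, ?_, ?_⟩
  · have hQmap : (Q₀.map (Complex.ofReal))ᴴ = Q₀ᵀ.map Complex.ofReal := by
      ext u w
      simp [Matrix.conjTranspose_apply, Matrix.map_apply]
    rw [Matrix.conjTranspose_mul, Matrix.diagonal_conjTranspose, hQmap, Matrix.mul_assoc,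
      ← Matrix.mul_assoc (Matrix.diagonal (star p)), Matrix.diagonal_mul_diagonal]
    have hdiag : (fun i => star p i * p i) = fun _ => (1:ℂ) := funext fun u => hpabs u
    rw [hdiag, Matrix.diagonal_one, Matrix.one_mul]
    have : Q₀ᵀ.map Complex.ofReal * Q₀.map Complex.ofReal = (Q₀ᵀ * Q₀).map Complex.ofReal := by
      rw [map_mul_ofReal]
    rw [this, hQ₀]
    exact Matrix.map_one _ Complex.ofReal_zero Complex.ofReal_one
  · intro u w hwu
    simp [Matrix.map_apply, hR₀tri u w hwu]
  · intro u w
    simp [Matrix.map_apply]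
  · intro u
    simp [Matrix.map_apply, hR₀pos u]
  · have key : Matrix.diagonal (fun u => (lam u : ℂ)) * perfectG4
        = Matrix.diagonal p * B.map Complex.ofReal := by
      ext u v
      rw [Matrix.diagonal_mul, Matrix.diagonal_mul, perfectG4_fac u v, Matrix.map_apply, hB,
        Matrix.diagonal_mul]
      push_cast
      rw [← mul_assoc, ← hpd u]
      ring
    rw [key, hBQR, map_mul_ofReal, Matrix.mul_assoc]
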